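/- Let H = ℓ²(ℤ) ⊗ ℂ^{2d} with cells H_x = span{|x↑r⟩, |x↓r⟩ : r = 1,…,d}, let S_↑ and S_↓ be the partial shifts (S_↑|x↑r⟩ = |x+1↑r⟩, S_↑|x↓r⟩ = |x↓r⟩, S_↓|x↑r⟩ = |x↑r⟩, S_↓|x↓r⟩ = |x−1↓r⟩), and let C = ⊕_{x∈ℤ} C_x be any unitary coin operator acting cell-wise. Then for every x ∈ ℤ, the Schur function f of the cell H_x with respect to the walk W = S_↓ C S_↑ is an even function: f(−z) = f(z) for all z in the open unit disk; equivalently, all odd-order coefficients P_x (W* P_x⊥)ⁿ W* P_x (n odd) in its power expansion vanish. -/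
import Mathlib


open Complex Filter Set Metric Matrix

open scoped ComplexInnerProductSpace

set_option linter.unusedSectionVars false

variable {H : Type*} [NormedAddCommGroup H] [InnerProductSpace ℂ H] [CompleteSpace H] {d : ℕ}

/-- The cell `H_x = span {|x↑r⟩, |x↓r⟩ : r}` of the lattice Hilbert space
`ℓ²(ℤ) ⊗ ℂ^{2d}` with orthonormal basis `e`, where `true = ↑` and `false = ↓`. -/
def cell (e : ℤ × Bool × Fin d → H) (x : ℤ) : Submodule ℂ H :=
  Submodule.span ℂ (e '' {p : ℤ × Bool × Fin d | p.1 = x})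

/-- The shifted cell `H̃_x = span {|x-1,↓,r⟩, |x,↑,r⟩ : r}`. -/
def tcell (e : ℤ × Bool × Fin d → H) (x : ℤ) : Submodule ℂ H :=
  Submodule.span ℂ (e '' {p : ℤ × Bool × Fin d |
    (p.1 = x - 1 ∧ p.2.1 = false) ∨ (p.1 = x ∧ p.2.1 = true)})

/-- The Schur function of the range of the orthogonal projection `P` with respect to `W`,
realized as the compression `P (W - z (1-P))⁻¹ P` on `H`. -/
noncomputable def schurP (W P : H →L[ℂ] H) (z : ℂ) : H →L[ℂ] H :=
  P ∘L Ring.inverse (W - z • (1 - P)) ∘L P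

section SchurAux

variable (e : ℤ × Bool × Fin d → H)

private lemma schur_inner_e (he : Orthonormal ℂ e) (p q : ℤ × Bool × Fin d) :
    ⟪e p, e q⟫ = if p = q then 1 else 0 := orthonormal_iff_ite.mp he p q

private lemma schur_inner_ext (hspan : (Submodule.span ℂ (Set.range e)).topologicalClosure = ⊤)
    {a b : H} (h : ∀ p, ⟪e p, a⟫ = ⟪e p, b⟫) : a = b := by
  have key : a - b ∈ (Submodule.span ℂ (Set.range e))ᗮ := by
    rw [Submodule.mem_orthogonal]
    intro u hu
    induction hu using Submodule.span_induction with
    | mem u hu => obtain ⟨p, rfl⟩ := hu; rw [inner_sub_right, h p, sub_self]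
    | zero => simp
    | add u v _ _ hu hv => rw [inner_add_left, hu, hv, add_zero]
    | smul c u _ hu => rw [inner_smul_left, hu, mul_zero]
  rw [Submodule.topologicalClosure_eq_top_iff.mp hspan, Submodule.mem_bot] at key
  exact sub_eq_zero.mp key

private lemma schur_inner_span_zero {T : Set (ℤ × Bool × Fin d)} {v : H}
    (hv : ∀ p ∈ T, ⟪e p, v⟫ = 0) {u : H} (hu : u ∈ Submodule.span ℂ (e '' T)) :
    ⟪u, v⟫ = 0 := by
  induction hu using Submodule.span_induction with
  | mem u hu => obtain ⟨p, hp, rfl⟩ := hu; exact hv p hp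
  | zero => simp
  | add u w _ _ hu hw => rw [inner_add_left, hu, hw, add_zero]
  | smul c u _ hu => rw [inner_smul_left, hu, mul_zero]

private lemma schur_mem_cell (x : ℤ) (c : Bool) (r : Fin d) : e (x, c, r) ∈ cell e x :=
  Submodule.subset_span ⟨(x, c, r), rfl, rfl⟩

private lemma schur_e_orth (he : Orthonormal ℂ e) (x : ℤ) {q : ℤ × Bool × Fin d}
    (hq : q.1 ≠ x) : e q ∈ (cell e x)ᗮ := by
  rw [Submodule.mem_orthogonal]
  intro u hu
  refine schur_inner_span_zero e (fun p hp => ?_) hu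
  rw [schur_inner_e e he, if_neg]
  intro hpq
  exact hq (by rw [← hpq]; exact hp)

variable {x : ℤ} {P : H →L[ℂ] H}

private lemma schur_P_zero (hP : ∀ v : H, P v ∈ cell e x ∧ v - P v ∈ (cell e x)ᗮ)
    {w : H} (hw : w ∈ (cell e x)ᗮ) : P w = 0 := by
  have h1 := (hP w).1
  have hmem : P w ∈ (cell e x)ᗮ := by
    have h : P w = w - (w - P w) := by abel
    rw [h]; exact Submodule.sub_mem _ hw (hP w).2
  exact inner_self_eq_zero.mp ((Submodule.mem_orthogonal _ _).1 hmem _ h1)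

private lemma schur_P_self (hP : ∀ v : H, P v ∈ cell e x ∧ v - P v ∈ (cell e x)ᗮ)
    {w : H} (hw : w ∈ cell e x) : P w = w := by
  have hmem : w - P w ∈ cell e x := Submodule.sub_mem _ hw (hP w).1
  have h0 := inner_self_eq_zero.mp ((Submodule.mem_orthogonal _ _).1 (hP w).2 _ hmem)
  exact (sub_eq_zero.mp h0).symm

private lemma schur_P_sa (hP : ∀ v : H, P v ∈ cell e x ∧ v - P v ∈ (cell e x)ᗮ)
    (a b : H) : ⟪P a, b⟫ = ⟪a, P b⟫ := by
  have h1 : ⟪P a, b - P b⟫ = 0 := (Submodule.mem_orthogonal _ _).1 (hP b).2 _ (hP a).1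
  have h2 : ⟪P b, a - P a⟫ = 0 := (Submodule.mem_orthogonal _ _).1 (hP a).2 _ (hP b).1
  have h2' : ⟪a - P a, P b⟫ = 0 := by rw [← inner_conj_symm, h2, map_zero]
  have e1 : ⟪P a, b⟫ = ⟪P a, P b⟫ := by
    have h := h1; rw [inner_sub_right] at h; exact sub_eq_zero.mp h
  have e2 : ⟪a, P b⟫ = ⟪P a, P b⟫ := by
    have h := h2'; rw [inner_sub_left] at h; exact sub_eq_zero.mp h
  rw [e1, e2]

private lemma schur_op_ext (hspan : (Submodule.span ℂ (Set.range e)).topologicalClosure = ⊤)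
    {A B : H →L[ℂ] H} (h : ∀ p, A (e p) = B (e p)) : A = B :=
  ContinuousLinearMap.ext_on (Submodule.dense_iff_topologicalClosure_eq_top.mpr hspan)
    (by rintro v ⟨p, rfl⟩; exact h p)

private lemma schur_star_basis (he : Orthonormal ℂ e)
    (hspan : (Submodule.span ℂ (Set.range e)).topologicalClosure = ⊤) (S : H →L[ℂ] H)
    (σ τ : ℤ × Bool × Fin d → ℤ × Bool × Fin d)
    (hS : ∀ p, S (e p) = e (σ p)) (hστ : ∀ p q, σ p = q ↔ p = τ q) (q : ℤ × Bool × Fin d) :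
    star S (e q) = e (τ q) := by
  refine schur_inner_ext e hspan fun p => ?_
  rw [ContinuousLinearMap.star_eq_adjoint, ContinuousLinearMap.adjoint_inner_right, hS,
    schur_inner_e e he, schur_inner_e e he]
  simp only [hστ]

end SchurAux

set_option maxHeartbeats 1600000 in
/-- For the walk `W = S_↓ C S_↑` on `ℓ²(ℤ) ⊗ ℂ^{2d}`, with `S_↑, S_↓`
the partial shifts and `C` any cell-wise unitary coin, the Schur function of each cell
`H_x` is even: `f(-z) = f(z)` on the unit disk; equivalently, all odd-order
coefficients `P_x (W* P_x^⊥)ⁿ W* P_x` of its power expansion vanish. -/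
theorem statement19
    (e : ℤ × Bool × Fin d → H) (he : Orthonormal ℂ e)
    (hspan : (Submodule.span ℂ (Set.range e)).topologicalClosure = ⊤)
    (Sup Sdn C : H →L[ℂ] H)
    (hSup_up : ∀ x r, Sup (e (x, true, r)) = e (x + 1, true, r))
    (hSup_dn : ∀ x r, Sup (e (x, false, r)) = e (x, false, r))
    (hSdn_up : ∀ x r, Sdn (e (x, true, r)) = e (x, true, r))
    (hSdn_dn : ∀ x r, Sdn (e (x, false, r)) = e (x - 1, false, r))
    (hCunit : C ∈ unitary (H →L[ℂ] H))
    (hCcell : ∀ x : ℤ, ∀ v ∈ cell e x, C v ∈ cell e x)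
    (x : ℤ) (P : H →L[ℂ] H)
    (hP : ∀ v : H, P v ∈ cell e x ∧ v - P v ∈ (cell e x)ᗮ) :
    (∀ z : ℂ, ‖z‖ < 1 → schurP (Sdn ∘L C ∘L Sup) P (-z) = schurP (Sdn ∘L C ∘L Sup) P z) ∧
    (∀ n : ℕ, Odd n →
      P ∘L ((star (Sdn ∘L C ∘L Sup) ∘L (1 - P)) ^ n) ∘L star (Sdn ∘L C ∘L Sup) ∘L P = 0) := by
  set W : H →L[ℂ] H := Sdn ∘L C ∘L Sup with hWdef
  -- ## Basic unitary algebra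
  have hC1 : star C * C = 1 := (Unitary.mem_iff.mp hCunit).1
  have hC2 : C * star C = 1 := (Unitary.mem_iff.mp hCunit).2
  -- basis action of the shifts, in uniform form
  have hSupb : ∀ p : ℤ × Bool × Fin d,
      Sup (e p) = e (p.1 + (if p.2.1 then 1 else 0), p.2) := by
    rintro ⟨y, c, s⟩
    cases c
    · simpa using hSup_dn y s
    · simpa using hSup_up y s
  have hSdnb : ∀ p : ℤ × Bool × Fin d,
      Sdn (e p) = e (p.1 - (if p.2.1 then 0 else 1), p.2) := by
    rintro ⟨y, c, s⟩
    cases c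
    · simpa using hSdn_dn y s
    · simpa using hSdn_up y s
  have haSup : ∀ q : ℤ × Bool × Fin d,
      star Sup (e q) = e (q.1 - (if q.2.1 then 1 else 0), q.2) := by
    intro q
    refine schur_star_basis e he hspan Sup _ (fun q => (q.1 - (if q.2.1 then 1 else 0), q.2)) hSupb (fun p q => ?_) q
    constructor
    · rintro rfl; obtain ⟨y, c, s⟩ := p; cases c <;> simp
    · rintro rfl; obtain ⟨y, c, s⟩ := q; cases c <;> simp
  have haSdn : ∀ q : ℤ × Bool × Fin d,
      star Sdn (e q) = e (q.1 + (if q.2.1 then 0 else 1), q.2) := by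
    intro q
    refine schur_star_basis e he hspan Sdn _ (fun q => (q.1 + (if q.2.1 then 0 else 1), q.2)) hSdnb (fun p q => ?_) q
    constructor
    · rintro rfl; obtain ⟨y, c, s⟩ := p; cases c <;> simp
    · rintro rfl; obtain ⟨y, c, s⟩ := q; cases c <;> simp
  have hSup1 : star Sup * Sup = 1 := by
    refine schur_op_ext e hspan fun p => ?_
    rw [ContinuousLinearMap.mul_apply, hSupb, haSup, ContinuousLinearMap.one_apply]
    obtain ⟨y, c, s⟩ := p; cases c <;> simp
  have hSup2 : Sup * star Sup = 1 := by
    refine schur_op_ext e hspan fun p => ?_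
    rw [ContinuousLinearMap.mul_apply, haSup, hSupb, ContinuousLinearMap.one_apply]
    obtain ⟨y, c, s⟩ := p; cases c <;> simp
  have hSdn1 : star Sdn * Sdn = 1 := by
    refine schur_op_ext e hspan fun p => ?_
    rw [ContinuousLinearMap.mul_apply, hSdnb, haSdn, ContinuousLinearMap.one_apply]
    obtain ⟨y, c, s⟩ := p; cases c <;> simp
  have hSdn2 : Sdn * star Sdn = 1 := by
    refine schur_op_ext e hspan fun p => ?_
    rw [ContinuousLinearMap.mul_apply, haSdn, hSdnb, ContinuousLinearMap.one_apply]
    obtain ⟨y, c, s⟩ := p; cases c <;> simp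
  have hWmul : W = Sdn * (C * Sup) := rfl
  have hstarW : star W = star Sup * (star C * star Sdn) := by
    rw [hWmul, StarMul.star_mul, StarMul.star_mul, mul_assoc]
  have hW1 : star W * W = 1 := by
    rw [hstarW, hWmul]
    calc star Sup * (star C * star Sdn) * (Sdn * (C * Sup))
        = star Sup * (star C * ((star Sdn * Sdn) * (C * Sup))) := by
          simp only [mul_assoc]
      _ = 1 := by rw [hSdn1, one_mul, ← mul_assoc (star C) C, hC1, one_mul, hSup1]
  have hW2 : W * star W = 1 := by
    rw [hstarW, hWmul]
    calc Sdn * (C * Sup) * (star Sup * (star C * star Sdn))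
        = Sdn * (C * ((Sup * star Sup) * (star C * star Sdn))) := by
          simp only [mul_assoc]
      _ = 1 := by rw [hSup2, one_mul, ← mul_assoc C (star C), hC2, one_mul, hSdn2]
  -- ## Action of W on basis vectors, as span membership
  have hSdn_cell : ∀ (m : ℤ) (v : H), v ∈ cell e m → Sdn v ∈ Submodule.span ℂ
      (e '' {p : ℤ × Bool × Fin d | (p.1 = m ∧ p.2.1 = true) ∨ (p.1 = m - 1 ∧ p.2.1 = false)}) := by
    intro m v hv
    induction hv using Submodule.span_induction with
    | mem u hu =>
      obtain ⟨⟨y, c, s⟩, hy, rfl⟩ := hu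
      have hy' : y = m := hy
      subst hy'
      cases c
      · rw [hSdn_dn]
        exact Submodule.subset_span ⟨(y - 1, false, s), Or.inr ⟨rfl, rfl⟩, rfl⟩
      · rw [hSdn_up]
        exact Submodule.subset_span ⟨(y, true, s), Or.inl ⟨rfl, rfl⟩, rfl⟩
    | zero => rw [map_zero]; exact Submodule.zero_mem _
    | add u v _ _ hu hv => rw [map_add]; exact Submodule.add_mem _ hu hv
    | smul c u _ hu => rw [ContinuousLinearMap.map_smul]; exact Submodule.smul_mem _ _ hu
  have hW_up : ∀ (y : ℤ) (s : Fin d), W (e (y, true, s)) ∈ Submodule.span ℂ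
      (e '' {p : ℤ × Bool × Fin d | (p.1 = y + 1 ∧ p.2.1 = true) ∨ (p.1 = y ∧ p.2.1 = false)}) := by
    intro y s
    have h1 : W (e (y, true, s)) = Sdn (C (e (y + 1, true, s))) := by
      rw [hWdef]; simp only [ContinuousLinearMap.comp_apply, hSup_up]
    rw [h1]
    have h2 := hSdn_cell (y + 1) _ (hCcell (y + 1) _ (schur_mem_cell e (y + 1) true s))
    rw [show y + 1 - 1 = y from by ring] at h2
    exact h2
  have hW_dn : ∀ (y : ℤ) (s : Fin d), W (e (y, false, s)) ∈ Submodule.span ℂ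
      (e '' {p : ℤ × Bool × Fin d | (p.1 = y ∧ p.2.1 = true) ∨ (p.1 = y - 1 ∧ p.2.1 = false)}) := by
    intro y s
    have h1 : W (e (y, false, s)) = Sdn (C (e (y, false, s))) := by
      rw [hWdef]; simp only [ContinuousLinearMap.comp_apply, hSup_dn]
    rw [h1]
    exact hSdn_cell y _ (hCcell y _ (schur_mem_cell e y false s))
  -- ## Inner-product moves
  have hstar_inner : ∀ (q : ℤ × Bool × Fin d) (v : H), ⟪e q, star W v⟫ = ⟪W (e q), v⟫ := by
    intro q v
    rw [ContinuousLinearMap.star_eq_adjoint, ContinuousLinearMap.adjoint_inner_right]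
  have honeP_sa : ∀ a u : H, ⟪(1 - P) a, u⟫ = ⟪a, (1 - P) u⟫ := by
    intro a u
    simp only [ContinuousLinearMap.sub_apply, ContinuousLinearMap.one_apply, inner_sub_left,
      inner_sub_right]
    rw [schur_P_sa e hP]
  have honeP_basis : ∀ q : ℤ × Bool × Fin d, q.1 ≠ x → (1 - P) (e q) = e q := by
    intro q hq
    rw [ContinuousLinearMap.sub_apply, ContinuousLinearMap.one_apply,
      schur_P_zero e hP (schur_e_orth e he x hq), sub_zero]
  have honeP_cell : ∀ q : ℤ × Bool × Fin d, q.1 = x → (1 - P) (e q) = 0 := by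
    intro q hq
    rw [ContinuousLinearMap.sub_apply, ContinuousLinearMap.one_apply]
    have : e q ∈ cell e x := by
      obtain ⟨y, c, s⟩ := q
      have : y = x := hq
      subst this
      exact schur_mem_cell e y c s
    rw [schur_P_self e hP this, sub_self]
  -- the one-step transfer operator
  set B : H →L[ℂ] H := (1 - P) * star W with hBdef
  have hinner_B : ∀ (q : ℤ × Bool × Fin d) (v : H), ⟪e q, B v⟫ = ⟪(1 - P) (e q), star W v⟫ := by
    intro q v
    rw [hBdef, ContinuousLinearMap.mul_apply, ← honeP_sa]
  -- ## Support propagation: left excursions (starting from spin up)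
  have hLeft : ∀ (r : Fin d) (n : ℕ) (q : ℤ × Bool × Fin d),
      ¬(q.1 ≤ x - 1 ∧ (2:ℤ) ∣ (q.1 + (if q.2.1 then 0 else 1) - x - ((n:ℤ) + 1))) →
      ⟪e q, (B ^ (n + 1)) (e (x, true, r))⟫ = 0 := by
    intro r n
    induction n with
    | zero =>
      intro q hq
      rw [pow_one, hinner_B]
      by_cases hqx : q.1 = x
      · rw [honeP_cell q hqx, inner_zero_left]
      · rw [honeP_basis q hqx, hstar_inner]
        obtain ⟨qy, qc, qs⟩ := q
        have hqx' : qy ≠ x := hqx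
        cases qc
        · refine schur_inner_span_zero e (fun p hp => ?_) (hW_dn qy qs)
          rw [schur_inner_e e he, if_neg]
          rintro rfl
          rcases hp with ⟨h1, h2⟩ | ⟨h1, h2⟩
          · exact hqx' h1.symm
          · exact Bool.noConfusion h2
        · refine schur_inner_span_zero e (fun p hp => ?_) (hW_up qy qs)
          rw [schur_inner_e e he, if_neg]
          rintro rfl
          rcases hp with ⟨h1, h2⟩ | ⟨h1, h2⟩
          · refine hq ⟨?_, ?_⟩ <;> simp only [] <;> push_cast <;> omega
          · exact Bool.noConfusion h2
    | succ n ih =>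
      intro q hq
      rw [pow_succ', ContinuousLinearMap.mul_apply, hinner_B]
      by_cases hqx : q.1 = x
      · rw [honeP_cell q hqx, inner_zero_left]
      · rw [honeP_basis q hqx, hstar_inner]
        obtain ⟨qy, qc, qs⟩ := q
        have hqx' : qy ≠ x := hqx
        cases qc
        · refine schur_inner_span_zero e (fun p hp => ?_) (hW_dn qy qs)
          refine ih p ?_
          rintro ⟨hp1, hp2⟩
          refine hq ⟨?_, ?_⟩
          · rcases hp with ⟨h1, h2⟩ | ⟨h1, h2⟩ <;> simp only [] <;> omega
          · rcases hp with ⟨h1, h2⟩ | ⟨h1, h2⟩ <;> rw [h1, h2] at hp2 <;>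
              simp only [if_true, if_false] at hp2 ⊢ <;> push_cast at hp2 ⊢ <;> omega
        · refine schur_inner_span_zero e (fun p hp => ?_) (hW_up qy qs)
          refine ih p ?_
          rintro ⟨hp1, hp2⟩
          refine hq ⟨?_, ?_⟩
          · rcases hp with ⟨h1, h2⟩ | ⟨h1, h2⟩ <;> simp only [] <;> omega
          · rcases hp with ⟨h1, h2⟩ | ⟨h1, h2⟩ <;> rw [h1, h2] at hp2 <;>
              simp only [if_true, if_false] at hp2 ⊢ <;> push_cast at hp2 ⊢ <;> omega
  -- ## Support propagation: right excursions (starting from spin down)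
  have hRight : ∀ (r : Fin d) (n : ℕ) (q : ℤ × Bool × Fin d),
      ¬(x + 1 ≤ q.1 ∧ (2:ℤ) ∣ (q.1 + (if q.2.1 then 0 else 1) - x - 1 - ((n:ℤ) + 1))) →
      ⟪e q, (B ^ (n + 1)) (e (x, false, r))⟫ = 0 := by
    intro r n
    induction n with
    | zero =>
      intro q hq
      rw [pow_one, hinner_B]
      by_cases hqx : q.1 = x
      · rw [honeP_cell q hqx, inner_zero_left]
      · rw [honeP_basis q hqx, hstar_inner]
        obtain ⟨qy, qc, qs⟩ := q
        have hqx' : qy ≠ x := hqx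
        cases qc
        · refine schur_inner_span_zero e (fun p hp => ?_) (hW_dn qy qs)
          rw [schur_inner_e e he, if_neg]
          rintro rfl
          rcases hp with ⟨h1, h2⟩ | ⟨h1, h2⟩
          · exact Bool.noConfusion h2
          · refine hq ⟨?_, ?_⟩ <;> simp only [] <;> push_cast <;> omega
        · refine schur_inner_span_zero e (fun p hp => ?_) (hW_up qy qs)
          rw [schur_inner_e e he, if_neg]
          rintro rfl
          rcases hp with ⟨h1, h2⟩ | ⟨h1, h2⟩
          · exact Bool.noConfusion h2
          · exact hqx' h1.symm
    | succ n ih =>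
      intro q hq
      rw [pow_succ', ContinuousLinearMap.mul_apply, hinner_B]
      by_cases hqx : q.1 = x
      · rw [honeP_cell q hqx, inner_zero_left]
      · rw [honeP_basis q hqx, hstar_inner]
        obtain ⟨qy, qc, qs⟩ := q
        have hqx' : qy ≠ x := hqx
        cases qc
        · refine schur_inner_span_zero e (fun p hp => ?_) (hW_dn qy qs)
          refine ih p ?_
          rintro ⟨hp1, hp2⟩
          refine hq ⟨?_, ?_⟩
          · rcases hp with ⟨h1, h2⟩ | ⟨h1, h2⟩ <;> simp only [] <;> omega
          · rcases hp with ⟨h1, h2⟩ | ⟨h1, h2⟩ <;> rw [h1, h2] at hp2 <;>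
              simp only [if_true, if_false] at hp2 ⊢ <;> push_cast at hp2 ⊢ <;> omega
        · refine schur_inner_span_zero e (fun p hp => ?_) (hW_up qy qs)
          refine ih p ?_
          rintro ⟨hp1, hp2⟩
          refine hq ⟨?_, ?_⟩
          · rcases hp with ⟨h1, h2⟩ | ⟨h1, h2⟩ <;> simp only [] <;> omega
          · rcases hp with ⟨h1, h2⟩ | ⟨h1, h2⟩ <;> rw [h1, h2] at hp2 <;>
              simp only [if_true, if_false] at hp2 ⊢ <;> push_cast at hp2 ⊢ <;> omega
  -- ## Odd coefficients kill the cell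
  have hVan : ∀ (k : ℕ) (c : Bool) (r : Fin d),
      P (star W ((B ^ (2 * k + 1)) (e (x, c, r)))) = 0 := by
    intro k c r
    refine schur_P_zero e hP ?_
    rw [Submodule.mem_orthogonal]
    intro u hu
    refine schur_inner_span_zero e (fun p hp => ?_) hu
    obtain ⟨py, pc, ps⟩ := p
    have hpy : py = x := hp
    subst hpy
    rw [hstar_inner]
    have h2k : ((2 * k : ℕ) : ℤ) + 1 = 2 * (k : ℤ) + 1 := by push_cast; ring
    cases c
    · -- start at spin down: right excursion
      cases pc
      · refine schur_inner_span_zero e (fun p' hp' => ?_) (hW_dn py ps)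
        refine hRight r (2 * k) p' ?_
        rintro ⟨h1, h2⟩
        rw [h2k] at h2
        rcases hp' with ⟨ha, hb⟩ | ⟨ha, hb⟩ <;> rw [hb] at h2 <;>
          simp only [Bool.false_eq_true, eq_self_iff_true, if_true, if_false] at h2 <;> omega
      · refine schur_inner_span_zero e (fun p' hp' => ?_) (hW_up py ps)
        refine hRight r (2 * k) p' ?_
        rintro ⟨h1, h2⟩
        rw [h2k] at h2
        rcases hp' with ⟨ha, hb⟩ | ⟨ha, hb⟩ <;> rw [hb] at h2 <;>
          simp only [Bool.false_eq_true, eq_self_iff_true, if_true, if_false] at h2 <;> omega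
    · -- start at spin up: left excursion
      cases pc
      · refine schur_inner_span_zero e (fun p' hp' => ?_) (hW_dn py ps)
        refine hLeft r (2 * k) p' ?_
        rintro ⟨h1, h2⟩
        rw [h2k] at h2
        rcases hp' with ⟨ha, hb⟩ | ⟨ha, hb⟩ <;> rw [hb] at h2 <;>
          simp only [Bool.false_eq_true, eq_self_iff_true, if_true, if_false] at h2 <;> omega
      · refine schur_inner_span_zero e (fun p' hp' => ?_) (hW_up py ps)
        refine hLeft r (2 * k) p' ?_
        rintro ⟨h1, h2⟩
        rw [h2k] at h2
        rcases hp' with ⟨ha, hb⟩ | ⟨ha, hb⟩ <;> rw [hb] at h2 <;>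
          simp only [Bool.false_eq_true, eq_self_iff_true, if_true, if_false] at h2 <;> omega
  -- ## Part 2 : odd power-series coefficients vanish
  have hshift : ∀ m : ℕ, ((star W * (1 - P)) ^ m) * star W = star W * (B ^ m) := by
    intro m
    induction m with
    | zero => simp
    | succ m ih =>
      rw [pow_succ, pow_succ, mul_assoc, mul_assoc (star W) ((1:H →L[ℂ] H) - P) (star W),
        ← hBdef, ← mul_assoc, ih, mul_assoc]
  have part2 : ∀ n : ℕ, Odd n →
      P ∘L ((star W ∘L (1 - P)) ^ n) ∘L star W ∘L P = 0 := by
    intro n hn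
    obtain ⟨k, hk⟩ := hn
    have hDmul : (star W ∘L (1 - P)) = star W * (1 - P) := rfl
    ext v
    have hv : P v ∈ cell e x := (hP v).1
    have key : ∀ u ∈ cell e x, P (star W ((B ^ n) u)) = 0 := by
      intro u hu
      induction hu using Submodule.span_induction with
      | mem u hu =>
        obtain ⟨⟨py, pc, ps⟩, hpy, rfl⟩ := hu
        have hpy' : py = x := hpy
        subst hpy'
        rw [hk]
        exact hVan k pc ps
      | zero => rw [map_zero, map_zero, map_zero]
      | add u w _ _ hu hw => rw [map_add, map_add, map_add, hu, hw, add_zero]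
      | smul a u _ hu =>
        rw [ContinuousLinearMap.map_smul, ContinuousLinearMap.map_smul,
          ContinuousLinearMap.map_smul, hu, smul_zero]
    have hcomp : (P ∘L ((star W ∘L (1 - P)) ^ n) ∘L star W ∘L P) v
        = P (star W ((B ^ n) (P v))) := by
      have h1 : ((star W ∘L (1 - P)) ^ n) ((star W) (P v)) = (star W) ((B ^ n) (P v)) := by
        calc ((star W ∘L (1 - P)) ^ n) ((star W) (P v))
            = (((star W * (1 - P)) ^ n) * star W) (P v) := rfl
          _ = (star W * B ^ n) (P v) := by rw [hshift n]
          _ = (star W) ((B ^ n) (P v)) := rfl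
      simp only [ContinuousLinearMap.comp_apply]
      rw [h1]
    rw [hcomp, key _ hv, ContinuousLinearMap.zero_apply]
  -- ## Norm estimates
  have hWiso : ∀ v : H, ‖W v‖ = ‖v‖ := by
    intro v
    have h2 : (star W) (W v) = v := by
      rw [← ContinuousLinearMap.mul_apply, hW1, ContinuousLinearMap.one_apply]
    have h : ⟪W v, W v⟫ = ⟪v, v⟫ := by
      calc ⟪W v, W v⟫ = ⟪v, (ContinuousLinearMap.adjoint W) (W v)⟫ :=
            (ContinuousLinearMap.adjoint_inner_right W v (W v)).symm
        _ = ⟪v, v⟫ := by rw [← ContinuousLinearMap.star_eq_adjoint, h2]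
    rw [inner_self_eq_norm_sq_to_K, inner_self_eq_norm_sq_to_K] at h
    have h3 : (‖W v‖ : ℝ) ^ 2 = ‖v‖ ^ 2 := by exact_mod_cast h
    nlinarith [norm_nonneg (W v), norm_nonneg v]
  have hWnorm : ‖star W‖ ≤ 1 := by
    rw [norm_star]
    refine ContinuousLinearMap.opNorm_le_bound _ zero_le_one fun v => ?_
    rw [hWiso, one_mul]
  have honePnorm : ‖(1 : H →L[ℂ] H) - P‖ ≤ 1 := by
    refine ContinuousLinearMap.opNorm_le_bound _ zero_le_one fun v => ?_
    rw [one_mul]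
    have hdecomp : v = P v + (v - P v) := by abel
    have hortho : ⟪P v, v - P v⟫ = 0 :=
      (Submodule.mem_orthogonal _ _).1 (hP v).2 _ (hP v).1
    have hpyth : ‖P v + (v - P v)‖ * ‖P v + (v - P v)‖
        = ‖P v‖ * ‖P v‖ + ‖v - P v‖ * ‖v - P v‖ :=
      norm_add_sq_eq_norm_sq_add_norm_sq_of_inner_eq_zero _ _ hortho
    rw [← hdecomp] at hpyth
    have h4 : ((1 : H →L[ℂ] H) - P) v = v - P v := by
      rw [ContinuousLinearMap.sub_apply, ContinuousLinearMap.one_apply]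
    rw [h4]
    nlinarith [norm_nonneg (P v), norm_nonneg v, norm_nonneg (v - P v)]
  -- ## Resolvent power series
  have hresolvent : ∀ z : ℂ, ‖z‖ < 1 → schurP W P z
      = ∑' n : ℕ, z ^ n • (P ∘L ((star W ∘L (1 - P)) ^ n) ∘L star W ∘L P) := by
    intro z hz
    set D : H →L[ℂ] H := star W * (1 - P) with hDdef
    have hDnorm : ‖D‖ ≤ 1 := le_trans (norm_mul_le _ _)
      (by nlinarith [norm_nonneg (star W), norm_nonneg ((1 : H →L[ℂ] H) - P)])
    have hT : ‖z • D‖ < 1 := by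
      rw [norm_smul]
      calc ‖z‖ * ‖D‖ ≤ ‖z‖ * 1 := mul_le_mul_of_nonneg_left hDnorm (norm_nonneg z)
        _ = ‖z‖ := mul_one _
        _ < 1 := hz
    set Wu : (H →L[ℂ] H)ˣ := ⟨W, star W, hW2, hW1⟩ with hWu
    set Vu : (H →L[ℂ] H)ˣ := Units.oneSub (z • D) hT with hVu
    have hval : W - z • (1 - P) = ↑(Wu * Vu) := by
      have hv : (↑(Wu * Vu) : H →L[ℂ] H) = W * (1 - z • D) := rfl
      rw [hv, mul_sub, mul_one, mul_smul_comm, hDdef, ← mul_assoc, hW2, one_mul]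
    have hinv : Ring.inverse (W - z • (1 - P)) = (∑' n : ℕ, (z • D) ^ n) * star W := by
      rw [hval, Ring.inverse_unit, _root_.mul_inv_rev, Units.val_mul]
      rfl
    have hs : Summable fun n : ℕ => (z • D) ^ n := summable_geometric_of_norm_lt_one hT
    have hschur : schurP W P z = P * (((∑' n : ℕ, (z • D) ^ n) * star W) * P) := by
      simp only [schurP, ← ContinuousLinearMap.mul_def]
      rw [hinv]
    rw [hschur, ← hs.tsum_mul_right (star W), ← (hs.mul_right (star W)).tsum_mul_right P,
      ← ((hs.mul_right (star W)).mul_right P).tsum_mul_left P]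
    refine tsum_congr fun n => ?_
    have hDD : star W ∘L (1 - P) = D := by
      rw [hDdef]; exact (ContinuousLinearMap.mul_def (star W) ((1 : H →L[ℂ] H) - P)).symm
    rw [hDD, ← ContinuousLinearMap.mul_def (star W) P,
      ← ContinuousLinearMap.mul_def (D ^ n) (star W * P),
      ← ContinuousLinearMap.mul_def P (D ^ n * (star W * P)),
      smul_pow z D n, smul_mul_assoc, smul_mul_assoc, mul_smul_comm,
      mul_assoc (D ^ n) (star W) P]
  -- ## Conclusion
  constructor
  · intro z hz
    rw [hresolvent z hz, hresolvent (-z) (by rwa [norm_neg])]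
    refine tsum_congr fun n => ?_
    rcases Nat.even_or_odd n with hev | hod
    · rw [hev.neg_pow z]
    · rw [part2 n hod, smul_zero, smul_zero]
  · exact part2
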